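/- Every set X ⊆ 2^ω satisfying: for every corset f there are countably many trees S_m, each almost of width f, with X ⊆ ⋃_m (Lim S_m)^{fin} — is meager-additive. -/

import Mathlib

open MeasureTheory Pointwise

/-- Cantor space `2^ω` with componentwise addition mod 2. -/
abbrev Cantor : Type := ℕ → ZMod 2
/-- Finite binary sequences, the nodes of `2^{<ω}`. -/
abbrev FinSeq : Type := List (ZMod 2)

instance : TopologicalSpace (ZMod 2) := ⊥
instance : DiscreteTopology (ZMod 2) := ⟨rfl⟩
noncomputable instance : MeasurableSpace Cantor := borel Cantor
instance : BorelSpace Cantor := ⟨rfl⟩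

/-- The uniform (Lebesgue) product measure on `2^ω`, realized as the Haar measure of the
compact group `2^ω` normalized so that the whole space has measure 1. -/
noncomputable def μC : Measure Cantor := Measure.addHaarMeasure ⊤

/-- `X` is null-additive: `X + A` is null for every null `A`. -/
def NullAdditive (X : Set Cantor) : Prop := ∀ A : Set Cantor, μC A = 0 → μC (X + A) = 0

/-- `X` is meager-additive: `X + A` is meager for every meager `A`. -/
def MeagerAdditive (X : Set Cantor) : Prop := ∀ A : Set Cantor, IsMeagre A → IsMeagre (X + A)

/-- A tree on `2^{<ω}`: nonempty, closed under initial segments, and every node has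
extensions in the tree of every greater length. -/
def IsTree (T : Set FinSeq) : Prop :=
  T.Nonempty ∧ (∀ σ τ : FinSeq, σ <+: τ → τ ∈ T → σ ∈ T) ∧
    ∀ σ ∈ T, ∀ n, σ.length < n → ∃ τ ∈ T, σ <+: τ ∧ τ.length = n

/-- Restriction `x↾n` of `x ∈ 2^ω`. -/
def res (x : Cantor) (n : ℕ) : FinSeq := (List.range n).map x

/-- `Lim T = {x ∈ 2^ω : ∀ n, x↾n ∈ T}`. -/
def LimT (T : Set FinSeq) : Set Cantor := {x | ∀ n, res x n ∈ T}

/-- A nowhere dense tree: every node has an extension outside the tree. -/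
def NwdTree (T : Set FinSeq) : Prop := ∀ η ∈ T, ∃ τ : FinSeq, η <+: τ ∧ τ ∉ T

/-- Componentwise mod-2 addition of finite sequences (of the same length). -/
def finAdd : FinSeq → FinSeq → FinSeq := List.zipWith (· + ·)

/-- `T + S = {η + σ : η ∈ T, σ ∈ S, same length}`. -/
def treeSum (T S : Set FinSeq) : Set FinSeq :=
  {ρ | ∃ η ∈ T, ∃ σ ∈ S, η.length = σ.length ∧ ρ = finAdd η σ}

/-- `T^{[η]} = {τ ∈ T : τ ⊑ η or η ⊑ τ}`. -/
def through (T : Set FinSeq) (η : FinSeq) : Set FinSeq := {τ ∈ T | τ <+: η ∨ η <+: τ}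

/-- `A^{fin}`: points agreeing with some point of `A` at all but finitely many coordinates. -/
def finEq (A : Set Cantor) : Set Cantor := {y | ∃ x ∈ A, ∀ᶠ n in Filter.atTop, y n = x n}

/-- `U^{⟨ν⟩} = {τ : ν⌢τ ∈ U}`. -/
def above (U : Set FinSeq) (ν : FinSeq) : Set FinSeq := {τ | ν ++ τ ∈ U}

/-- A corset: a nondecreasing function `ω → ω \ {0}` tending to infinity. -/
def Corset (f : ℕ → ℕ) : Prop :=
  Monotone f ∧ (∀ n, 0 < f n) ∧ Filter.Tendsto f Filter.atTop Filter.atTop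

/-- `S` is of width `f`: `|S ∩ 2^n| ≤ f n` for all `n`. -/
def widthLe (S : Set FinSeq) (f : ℕ → ℕ) : Prop := ∀ n, {τ ∈ S | τ.length = n}.ncard ≤ f n

/-- `S` is almost of width `f`: `|S ∩ 2^n| ≤ f n` for all sufficiently large `n`. -/
def almostWidthLe (S : Set FinSeq) (f : ℕ → ℕ) : Prop :=
  ∀ᶠ n in Filter.atTop, {τ ∈ S | τ.length = n}.ncard ≤ f n

-- ### basic lemmas
@[simp] lemma res_length (x : Cantor) (n : ℕ) : (res x n).length = n := by
  simp [res]

@[simp] lemma res_getElem (x : Cantor) {n i : ℕ} (h : i < n) :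
    (res x n)[i]'(by simpa using h) = x i := by
  simp [res]

lemma res_take (x : Cantor) (m n : ℕ) (h : m ≤ n) : (res x n).take m = res x m := by
  apply List.ext_getElem <;> simp [res, Nat.min_eq_left h, List.getElem_take]

lemma res_prefix (x : Cantor) {m n : ℕ} (h : m ≤ n) : res x m <+: res x n := by
  rw [← res_take x m n h]; exact List.take_prefix _ _

def cyl (ρ : FinSeq) : Set Cantor := {x | res x ρ.length = ρ}

lemma mem_cyl {x : Cantor} {ρ : FinSeq} : x ∈ cyl ρ ↔ res x ρ.length = ρ := Iff.rfl

lemma self_mem_cyl (x : Cantor) (n : ℕ) : x ∈ cyl (res x n) := by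
  simp [mem_cyl]

lemma cyl_mono {σ τ : FinSeq} (h : σ <+: τ) : cyl τ ⊆ cyl σ := by
  intro x hx
  have hl : σ.length ≤ τ.length := h.length_le
  rw [mem_cyl] at hx ⊢
  rw [← res_take x _ _ hl, hx, ← List.prefix_iff_eq_take.mp h]

lemma extendZero_mem_cyl (ρ : FinSeq) : (fun i => ρ.getD i 0) ∈ cyl ρ := by
  rw [mem_cyl]
  apply List.ext_getElem (by simp)
  intro i h1 h2
  rw [res_getElem _ h2, List.getD_eq_getElem ρ 0 h2]

lemma cyl_nonempty (ρ : FinSeq) : (cyl ρ).Nonempty := ⟨_, extendZero_mem_cyl ρ⟩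

lemma cyl_append_subset (ρ l : FinSeq) : cyl (ρ ++ l) ⊆ cyl ρ :=
  cyl_mono (List.prefix_append ρ l)

@[simp] lemma finAdd_length (a b : FinSeq) : (finAdd a b).length = min a.length b.length := by
  simp [finAdd]

lemma finAdd_take (a b : FinSeq) (n : ℕ) :
    (finAdd a b).take n = finAdd (a.take n) (b.take n) := by
  simp [finAdd, List.take_zipWith]

lemma finAdd_getElem (a b : FinSeq) {i : ℕ} (h : i < (finAdd a b).length) :
    (finAdd a b)[i] = a[i]'(by simp at h; omega) + b[i]'(by simp at h; omega) := by
  simp [finAdd]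

lemma finAdd_finAdd_self (a b : FinSeq) (h : a.length = b.length) :
    finAdd (finAdd a b) b = a := by
  apply List.ext_getElem (by simp [h]) (fun i h1 h2 => ?_)
  rw [finAdd_getElem _ _ h1, finAdd_getElem _ _ (by simp at h1 ⊢; omega),
    add_assoc, CharTwo.add_self_eq_zero, add_zero]

lemma res_add (x y : Cantor) (n : ℕ) : res (x + y) n = finAdd (res x n) (res y n) := by
  apply List.ext_getElem (by simp)
  intro i h1 h2
  rw [finAdd_getElem, res_getElem, res_getElem, res_getElem] <;> simp at h1 ⊢ <;> omega

-- ### topology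
lemma cyl_eq (ρ : FinSeq) : cyl ρ = ⋂ i ∈ Finset.range ρ.length,
    (fun x : Cantor => x i) ⁻¹' {ρ.getD i 0} := by
  ext x
  simp only [Set.mem_iInter, Set.mem_preimage, Set.mem_singleton_iff, Finset.mem_range, mem_cyl]
  constructor
  · intro h i hi
    rw [← h]
    rw [List.getD_eq_getElem _ 0 (by simpa using hi), res_getElem _ hi]
  · intro h
    apply List.ext_getElem (by simp)
    intro i h1 h2
    rw [res_getElem _ h2, ← List.getD_eq_getElem _ 0 h2, h i h2]

lemma isOpen_cyl (ρ : FinSeq) : IsOpen (cyl ρ) := by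
  rw [cyl_eq]
  exact isOpen_biInter_finset fun i _ =>
    (continuous_apply i).isOpen_preimage _ (isOpen_discrete _)

lemma exists_cyl_subset {U : Set Cantor} (hU : IsOpen U) {x : Cantor} (hx : x ∈ U) :
    ∃ n, cyl (res x n) ⊆ U := by
  have h : U ∈ nhds x := hU.mem_nhds hx
  rw [nhds_pi, Filter.mem_pi] at h
  obtain ⟨I, hI, t, ht, hsub⟩ := h
  obtain ⟨n, hn⟩ := hI.bddAbove
  refine ⟨n + 1, fun y hy => hsub ?_⟩
  intro i hi
  have hin : i < n + 1 := Nat.lt_succ_of_le (hn hi)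
  have : y i = x i := by
    rw [mem_cyl] at hy
    rw [res_length] at hy
    have h2 : (res y (n+1))[i]'(by simpa using hin) = (res x (n+1))[i]'(by simpa using hin) := by
      exact List.getElem_of_eq hy _
    rwa [res_getElem _ hin, res_getElem _ hin] at h2
  rw [this]
  exact mem_of_mem_nhds (by simpa [nhds_discrete] using ht i)

/-- nowhere density phrased via cylinders -/
def CylNwd (B : Set Cantor) : Prop := ∀ ρ : FinSeq, ∃ τ, ρ <+: τ ∧ cyl τ ∩ B = ∅

lemma CylNwd.isNowhereDense {B : Set Cantor} (h : CylNwd B) : IsNowhereDense B := by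
  rw [IsNowhereDense, Set.eq_empty_iff_forall_notMem]
  intro x hx
  obtain ⟨n, hn⟩ := exists_cyl_subset isOpen_interior hx
  obtain ⟨τ, hpre, hdisj⟩ := h (res x n)
  obtain ⟨z, hz⟩ := cyl_nonempty τ
  have hzc : z ∈ closure B := interior_subset (hn (cyl_mono hpre hz))
  rw [mem_closure_iff] at hzc
  have := hzc (cyl τ) (isOpen_cyl τ) hz
  rw [hdisj] at this
  exact this.ne_empty rfl

lemma cylNwd_of_closed_nwd {M : Set Cantor} (hc : IsClosed M) (hn : IsNowhereDense M) :
    CylNwd M := by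
  intro ρ
  have hint : interior M = ∅ := (hc.isNowhereDense_iff).mp hn
  have : ¬ cyl ρ ⊆ M := by
    intro hsub
    have := interior_maximal hsub (isOpen_cyl ρ)
    rw [hint] at this
    exact (cyl_nonempty ρ).ne_empty (Set.eq_empty_iff_forall_notMem.mpr fun x hx => this hx)
  obtain ⟨x, hx, hxM⟩ := Set.not_subset.mp this
  obtain ⟨n, hn'⟩ := exists_cyl_subset hc.isOpen_compl hxM
  refine ⟨res x (max n ρ.length), ?_, ?_⟩
  · rw [mem_cyl] at hx
    conv_lhs => rw [← hx]
    exact res_prefix x (by simp)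
  · rw [Set.eq_empty_iff_forall_notMem]
    intro y ⟨hy1, hy2⟩
    exact hn' (cyl_mono (res_prefix x (le_max_left _ _)) hy1) hy2

-- ### uniform extension
lemma uniform_ext {M : Set Cantor} (hM : CylNwd M) (m : ℕ) :
    ∃ L, m < L ∧ ∀ n' ≥ L, ∀ π : FinSeq, π.length = m →
      ∃ τ, π <+: τ ∧ τ.length = n' ∧ cyl τ ∩ M = ∅ := by
  have hfin : {π : FinSeq | π.length = m}.Finite := List.finite_length_eq _ m
  have hev : ∀ π ∈ {π : FinSeq | π.length = m}, ∀ᶠ n' in Filter.atTop,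
      ∃ τ, π <+: τ ∧ τ.length = n' ∧ cyl τ ∩ M = ∅ := by
    intro π _
    obtain ⟨τ₀, hpre, hdisj⟩ := hM π
    rw [Filter.eventually_atTop]
    refine ⟨τ₀.length, fun n' hn' => ⟨τ₀ ++ List.replicate (n' - τ₀.length) 0,
      hpre.trans (List.prefix_append _ _), by simp; omega, ?_⟩⟩
    exact Set.eq_empty_of_subset_empty (hdisj ▸
      Set.inter_subset_inter_left M (cyl_append_subset _ _))
  have := ((hfin.eventually_all).mpr hev).and (Filter.eventually_gt_atTop m)
  rw [Filter.eventually_atTop] at this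
  obtain ⟨L, hL⟩ := this
  refine ⟨max L (m+1), by omega, fun n' hn' π hπ => (hL n' (le_trans (le_max_left _ _) hn')).1 π hπ⟩

-- ### prefixes and finAdd
lemma finAdd_prefix {ρ ρ' σ σ' : FinSeq} (h1 : ρ <+: ρ') (h2 : σ <+: σ')
    (hl : σ.length = ρ.length) : finAdd ρ σ <+: finAdd ρ' σ' := by
  rw [List.prefix_iff_eq_take, finAdd_length, hl, min_self, finAdd_take]
  congr 1
  · exact List.prefix_iff_eq_take.mp h1
  · rw [← hl]; exact List.prefix_iff_eq_take.mp h2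

lemma prefix_eq_of_length_eq {σ τ l : FinSeq} (h1 : σ <+: l) (h2 : τ <+: l)
    (h : σ.length = τ.length) : σ = τ := by
  rw [List.prefix_iff_eq_take.mp h1, List.prefix_iff_eq_take.mp h2, h]

-- ### the killing recursion
lemma killAll {M : Set Cantor} {S : Set FinSeq} (hS : IsTree S) (n : ℕ → ℕ)
    (hn : StrictMono n) (k0 T : ℕ)
    (hext : ∀ k, k0 ≤ k → ∀ π : FinSeq, π.length = n k →
      ∃ τ, π <+: τ ∧ τ.length = n (k+1) ∧ cyl τ ∩ M = ∅)
    (hwidth : {σ | σ ∈ S ∧ σ.length = n (k0+T)}.ncard < T)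
    (ρ₀ : FinSeq) (h0 : ρ₀.length = n k0) :
    ∃ ρ, ρ₀ <+: ρ ∧ ρ.length = n (k0+T) ∧
      ∀ σ ∈ S, σ.length = n (k0+T) → cyl (finAdd ρ σ) ∩ M = ∅ := by
  set Dead : FinSeq → Set FinSeq := fun ρ =>
    {σ | σ ∈ S ∧ σ.length = ρ.length ∧ cyl (finAdd ρ σ) ∩ M = ∅} with hDead
  have hDeadFin : ∀ ρ : FinSeq, (Dead ρ).Finite := fun ρ =>
    (List.finite_length_eq _ ρ.length).subset (fun σ hσ => hσ.2.1)
  have hered : ∀ ρ ρ' σ σ' : FinSeq, σ ∈ Dead ρ → ρ <+: ρ' → σ <+: σ' → σ' ∈ S →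
      σ'.length = ρ'.length → σ' ∈ Dead ρ' := by
    intro ρ ρ' σ σ' hσ hρ hσσ hσ'S hlen
    exact ⟨hσ'S, hlen, Set.eq_empty_of_subset_empty (hσ.2.2 ▸
      Set.inter_subset_inter_left M (cyl_mono (finAdd_prefix hρ hσσ hσ.2.1)))⟩
  have main : ∀ t, ∃ ρ : FinSeq, ρ₀ <+: ρ ∧ ρ.length = n (k0+t) ∧
      ((∀ σ ∈ S, σ.length = ρ.length → cyl (finAdd ρ σ) ∩ M = ∅) ∨ t ≤ (Dead ρ).ncard) := by
    intro t
    induction t with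
    | zero => exact ⟨ρ₀, List.prefix_refl _, h0, Or.inr (Nat.zero_le _)⟩
    | succ t ih =>
      obtain ⟨ρ, hpre, hlen, hdisj⟩ := ih
      show ∃ ρ : FinSeq, ρ₀ <+: ρ ∧ ρ.length = n (k0+t+1) ∧
        ((∀ σ ∈ S, σ.length = ρ.length → cyl (finAdd ρ σ) ∩ M = ∅) ∨ t+1 ≤ (Dead ρ).ncard)
      by_cases hall : ∀ σ ∈ S, σ.length = ρ.length → cyl (finAdd ρ σ) ∩ M = ∅
      · -- extend by zeros, stay all-dead
        have hmono : n (k0+t) ≤ n (k0+t+1) := le_of_lt (hn (lt_add_one _))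
        have hρ' : (ρ ++ List.replicate (n (k0+t+1) - n (k0+t)) 0).length = n (k0+t+1) := by
          simp [hlen]; omega
        refine ⟨ρ ++ List.replicate (n (k0+t+1) - n (k0+t)) 0,
          hpre.trans (List.prefix_append _ _), hρ', Or.inl ?_⟩
        intro σ' hσ'S hσ'len
        rw [hρ'] at hσ'len
        have hσtake : σ'.take (n (k0+t)) ∈ S :=
          hS.2.1 _ _ (List.take_prefix _ _) hσ'S
        have hσtlen : (σ'.take (n (k0+t))).length = n (k0+t) := by
          rw [List.length_take, hσ'len]; omega
        have hd : σ'.take (n (k0+t)) ∈ Dead ρ :=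
          ⟨hσtake, by rw [hσtlen, hlen], hall _ hσtake (by rw [hσtlen, hlen])⟩
        exact (hered ρ _ _ σ' hd (List.prefix_append _ _) (List.take_prefix _ _) hσ'S
          (by rw [hσ'len, hρ'])).2.2
      · -- kill one more node
        have hcount : t ≤ (Dead ρ).ncard := hdisj.resolve_left hall
        push_neg at hall
        obtain ⟨σs, hσsS, hσslen, hσsalive⟩ := hall
        have hπlen : (finAdd ρ σs).length = n (k0+t) := by
          rw [finAdd_length, hσslen, min_self, hlen]
        obtain ⟨τ, hτpre, hτlen, hτdisj⟩ := hext (k0+t) (Nat.le_add_right _ _) _ hπlen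
        obtain ⟨σh, hσhS, hσhpre, hσhlen⟩ :=
          hS.2.2 σs hσsS (n (k0+t+1)) (by rw [hσslen, hlen]; exact hn (lt_add_one _))
        set ρ' := finAdd τ σh with hρ'def
        have hρ'len : ρ'.length = n (k0+t+1) := by
          rw [hρ'def, finAdd_length, hτlen, hσhlen, min_self]
        have htake1 : τ.take (n (k0+t)) = finAdd ρ σs := by
          rw [← hπlen]; exact (List.prefix_iff_eq_take.mp hτpre).symm
        have htake2 : σh.take (n (k0+t)) = σs := by
          rw [← hlen, ← hσslen]; exact (List.prefix_iff_eq_take.mp hσhpre).symm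
        have hρρ' : ρ <+: ρ' := by
          rw [List.prefix_iff_eq_take, hlen, hρ'def, finAdd_take, htake1, htake2,
            finAdd_finAdd_self _ _ hσslen.symm]
        -- extension function
        have hEex : ∀ σ ∈ Dead ρ, ∃ σ' ∈ S, σ <+: σ' ∧ σ'.length = n (k0+t+1) := by
          intro σ hσ
          exact hS.2.2 σ hσ.1 _ (by rw [hσ.2.1, hlen]; exact hn (lt_add_one _))
        choose E hES hEpre hElen using hEex
        have hEdead : ∀ σ (hσ : σ ∈ Dead ρ), E σ hσ ∈ Dead ρ' := fun σ hσ =>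
          hered ρ ρ' σ _ hσ hρρ' (hEpre σ hσ) (hES σ hσ) (by rw [hElen σ hσ, hρ'len])
        have hσhdead : σh ∈ Dead ρ' := by
          refine ⟨hσhS, by rw [hσhlen, hρ'len], ?_⟩
          rw [hρ'def, finAdd_finAdd_self _ _ (hτlen.trans hσhlen.symm)]
          exact hτdisj
        -- image of Dead ρ under E, using a dependent-choice-free image
        set img : Set FinSeq := {σ' | ∃ σ, ∃ hσ : σ ∈ Dead ρ, σ' = E σ hσ} with himg
        have himgsub : insert σh img ⊆ Dead ρ' := by
          intro σ' hσ'
          rcases hσ' with rfl | ⟨σ, hσ, rfl⟩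
          · exact hσhdead
          · exact hEdead σ hσ
        have hrestr : ∀ σ (hσ : σ ∈ Dead ρ), (E σ hσ).take (n (k0+t)) = σ := by
          intro σ hσ
          rw [← hlen, ← hσ.2.1]
          exact (List.prefix_iff_eq_take.mp (hEpre σ hσ)).symm
        have hσhnot : σh ∉ img := by
          rintro ⟨σ, hσ, heq⟩
          have hσeq : σ = σs := by rw [← hrestr σ hσ, ← heq, htake2]
          have h2 := hσ.2.2
          rw [hσeq] at h2
          rw [h2] at hσsalive
          exact Set.not_nonempty_empty hσsalive
        -- the map σ ↦ take is injective from img back to Dead ρ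
        have himgcard : (Dead ρ).ncard ≤ img.ncard := by
          have : Dead ρ ⊆ (fun σ' : FinSeq => σ'.take (n (k0+t))) '' img := by
            intro σ hσ
            exact ⟨E σ hσ, ⟨σ, hσ, rfl⟩, hrestr σ hσ⟩
          calc (Dead ρ).ncard ≤ ((fun σ' : FinSeq => σ'.take (n (k0+t))) '' img).ncard :=
                Set.ncard_le_ncard this (((hDeadFin ρ').subset
                  (fun x hx => himgsub (Set.mem_insert_of_mem _ hx))).image _)
            _ ≤ img.ncard := Set.ncard_image_le ((hDeadFin ρ').subset
                  (fun x hx => himgsub (Set.mem_insert_of_mem _ hx)))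
        have himgfin : img.Finite := (hDeadFin ρ').subset
          (fun x hx => himgsub (Set.mem_insert_of_mem _ hx))
        refine ⟨ρ', hpre.trans hρρ', hρ'len, Or.inr ?_⟩
        calc t+1 ≤ (Dead ρ).ncard + 1 := by omega
          _ ≤ img.ncard + 1 := by omega
          _ = (insert σh img).ncard := (Set.ncard_insert_of_notMem hσhnot himgfin).symm
          _ ≤ (Dead ρ').ncard := Set.ncard_le_ncard himgsub (hDeadFin ρ')
  obtain ⟨ρ, h1, h2, h3⟩ := main T
  refine ⟨ρ, h1, h2, ?_⟩
  rcases h3 with h3 | h3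
  · intro σ hσS hσlen
    exact h3 σ hσS (by rw [hσlen, h2])
  · exfalso
    have hsub : Dead ρ ⊆ {σ | σ ∈ S ∧ σ.length = n (k0+T)} := by
      intro σ hσ
      exact ⟨hσ.1, by rw [hσ.2.1, h2]⟩
    have := Set.ncard_le_ncard hsub ((List.finite_length_eq _ _).subset (fun σ hσ => hσ.2))
    omega

-- ### all-dead implies cylinder disjoint from sum
lemma cyl_disjoint_sum {M : Set Cantor} {S : Set FinSeq} {ρ : FinSeq}
    (h : ∀ σ ∈ S, σ.length = ρ.length → cyl (finAdd ρ σ) ∩ M = ∅) :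
    cyl ρ ∩ (LimT S + M) = ∅ := by
  rw [Set.eq_empty_iff_forall_notMem]
  rintro y ⟨hy, hysum⟩
  rw [Set.mem_add] at hysum
  obtain ⟨x, hx, m, hm, hxm⟩ := hysum
  have hmyx : m = y + x := by
    funext i
    have hyi : y i = x i + m i := by rw [← hxm]; rfl
    show m i = y i + x i
    rw [hyi, add_comm (x i) (m i), add_assoc, CharTwo.add_self_eq_zero, add_zero]
  have hσ : res x ρ.length ∈ S := hx ρ.length
  have hmem : m ∈ cyl (finAdd ρ (res x ρ.length)) := by
    rw [mem_cyl, finAdd_length, res_length, min_self, hmyx, res_add]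
    rw [mem_cyl] at hy
    rw [hy]
  have := h _ hσ (res_length _ _)
  rw [Set.eq_empty_iff_forall_notMem] at this
  exact this m ⟨hmem, hm⟩

-- ### translation preserves CylNwd
lemma CylNwd.vadd {B : Set Cantor} (hB : CylNwd B) (t : Cantor) : CylNwd ({t} + B) := by
  intro ρ
  obtain ⟨τ', hpre', hdisj'⟩ := hB (finAdd ρ (res t ρ.length))
  have hρ'len : (finAdd ρ (res t ρ.length)).length = ρ.length := by
    rw [finAdd_length, res_length, min_self]
  have hρτ' : ρ.length ≤ τ'.length := hρ'len ▸ hpre'.length_le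
  refine ⟨finAdd τ' (res t τ'.length), ?_, ?_⟩
  · rw [List.prefix_iff_eq_take, finAdd_take, res_take t _ _ hρτ',
      ← hρ'len, ← List.prefix_iff_eq_take.mp hpre', hρ'len,
      finAdd_finAdd_self _ _ (res_length t ρ.length).symm]
  · rw [Set.eq_empty_iff_forall_notMem]
    rintro y ⟨hy, hysum⟩
    rw [Set.mem_add] at hysum
    obtain ⟨t₀, ht₀, x, hx, htx⟩ := hysum
    rw [Set.mem_singleton_iff] at ht₀
    rw [ht₀] at htx
    have hxyt : x = y + t := by
      funext i
      have hyi : y i = t i + x i := by rw [← htx]; rfl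
      show x i = y i + t i
      rw [hyi, add_comm (t i) (x i), add_assoc, CharTwo.add_self_eq_zero, add_zero]
    have hlen : (finAdd τ' (res t τ'.length)).length = τ'.length := by
      rw [finAdd_length, res_length, min_self]
    have : x ∈ cyl τ' := by
      rw [mem_cyl, hxyt, res_add]
      rw [mem_cyl, hlen] at hy
      rw [hy, finAdd_finAdd_self _ _ (res_length t τ'.length).symm]
    rw [Set.eq_empty_iff_forall_notMem] at hdisj'
    exact hdisj' x ⟨this, hx⟩

-- ### finitely supported points
def FinSupp : Set Cantor := {t | ∃ N, ∀ m ≥ N, t m = 0}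

lemma finSupp_countable : FinSupp.Countable := by
  have : FinSupp ⊆ Set.range (fun ρ : FinSeq => (fun i => ρ.getD i 0 : Cantor)) := by
    rintro t ⟨N, hN⟩
    refine ⟨res t N, ?_⟩
    funext i
    show (res t N).getD i 0 = t i
    by_cases hi : i < N
    · rw [List.getD_eq_getElem _ 0 (by simpa using hi), res_getElem _ hi]
    · rw [List.getD_eq_default _ 0 (by simpa using not_lt.mp hi), hN i (not_lt.mp hi)]
  exact Set.Countable.mono this (Set.countable_range _)

lemma finSupp_nonempty : FinSupp.Nonempty := ⟨0, 0, fun m _ => rfl⟩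

lemma finEq_subset_union {A : Set Cantor} : finEq A ⊆ ⋃ t ∈ FinSupp, ({t} + A) := by
  rintro y ⟨x, hx, hev⟩
  rw [Filter.eventually_atTop] at hev
  obtain ⟨N, hN⟩ := hev
  have ht : (y + x) ∈ FinSupp := by
    refine ⟨N, fun m hm => ?_⟩
    show y m + x m = 0
    rw [hN m hm, CharTwo.add_self_eq_zero]
  refine Set.mem_biUnion ht ?_
  rw [Set.mem_add]
  refine ⟨y + x, rfl, x, hx, ?_⟩
  funext i
  show y i + x i + x i = y i
  rw [add_assoc, CharTwo.add_self_eq_zero, add_zero]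

lemma CylNwd.isMeagre {B : Set Cantor} (hB : CylNwd B) : IsMeagre B := by
  rw [isMeagre_iff_countable_union_isNowhereDense]
  exact ⟨{B}, by simpa using hB.isNowhereDense, Set.countable_singleton _, by simp⟩

lemma cylNwd_empty : CylNwd (∅ : Set Cantor) :=
  fun ρ => ⟨ρ, List.prefix_refl _, Set.inter_empty _⟩


/-- every set satisfying condition (c) of Theorem 13 is meager-additive. -/
theorem stmt18 (X : Set Cantor)
    (h : ∀ f : ℕ → ℕ, Corset f → ∃ S : ℕ → Set FinSeq,
      (∀ m, IsTree (S m) ∧ almostWidthLe (S m) f) ∧ X ⊆ ⋃ m, finEq (LimT (S m))) :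
    MeagerAdditive X := by
  intro A hA
  -- decompose A into countably many closed nowhere dense sets
  obtain ⟨𝒮, hnwd, hcnt, hsub⟩ := isMeagre_iff_countable_union_isNowhereDense.mp hA
  obtain ⟨M, hM⟩ := ((hcnt.image closure).insert ∅).exists_eq_range
    (Set.insert_nonempty _ _)
  have hMnwd : ∀ j, CylNwd (M j) := by
    intro j
    have : M j ∈ insert ∅ (closure '' 𝒮) := by rw [hM]; exact Set.mem_range_self j
    rcases this with h0 | ⟨s, hs, hseq⟩
    · rw [h0]; exact cylNwd_empty
    · rw [← hseq]; exact cylNwd_of_closed_nwd isClosed_closure (hnwd s hs).closure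
  have hAcover : A ⊆ ⋃ j, M j := by
    intro a ha
    obtain ⟨s, hs, has⟩ := hsub ha
    have : closure s ∈ insert ∅ (closure '' 𝒮) := Set.mem_insert_of_mem _ ⟨s, hs, rfl⟩
    rw [hM] at this
    obtain ⟨j, hj⟩ := this
    exact Set.mem_iUnion.mpr ⟨j, hj ▸ subset_closure has⟩
  -- uniform extension bounds
  have hu : ∀ j m, ∃ L, m < L ∧ ∀ n' ≥ L, ∀ π : FinSeq, π.length = m →
      ∃ τ, π <+: τ ∧ τ.length = n' ∧ cyl τ ∩ M j = ∅ := fun j m => uniform_ext (hMnwd j) m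
  choose u hu1 hu2 using hu
  -- the checkpoint sequence
  set n : ℕ → ℕ := fun k => Nat.rec 0
    (fun k nk => max (nk+1) ((Finset.range (k+1)).sup (fun j => u j nk))) k with hn
  have hnsucc : ∀ k, n (k+1) = max (n k + 1) ((Finset.range (k+1)).sup (fun j => u j (n k))) :=
    fun k => rfl
  have hn0 : n 0 = 0 := rfl
  have hmono : StrictMono n := strictMono_nat_of_lt_succ (fun k => by
    rw [hnsucc]; omega)
  have hE : ∀ j k, j ≤ k → ∀ π : FinSeq, π.length = n k →
      ∃ τ, π <+: τ ∧ τ.length = n (k+1) ∧ cyl τ ∩ M j = ∅ := by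
    intro j k hjk π hπ
    refine hu2 j (n k) (n (k+1)) ?_ π hπ
    rw [hnsucc]
    exact le_trans (Finset.le_sup (f := fun j => u j (n k))
      (Finset.mem_range.mpr (Nat.lt_succ_of_le hjk))) (le_max_right _ _)
  -- the corset
  set F : ℕ → ℕ := fun m => Nat.findGreatest (fun k => n (2*k) ≤ m) m with hF
  set f : ℕ → ℕ := fun m => max 1 (F m) with hfdef
  have hspec : ∀ m, n (2 * F m) ≤ m := by
    intro m
    simp only [hF]
    exact Nat.findGreatest_spec (P := fun k => n (2*k) ≤ m) (Nat.zero_le m)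
      (by show n (2*0) ≤ m; rw [Nat.mul_zero, hn0]; exact Nat.zero_le m)
  have hFle : ∀ m, F m ≤ m := by
    intro m; simp only [hF]; exact Nat.findGreatest_le m
  have hFmono : Monotone F := by
    intro a b hab
    have h1 := hspec a
    simp only [hF] at h1 ⊢
    exact Nat.le_findGreatest (P := fun k => n (2*k) ≤ b)
      (le_trans (Nat.findGreatest_le a) hab) (le_trans h1 hab)
  have hfkey : ∀ k, f (n k) ≤ max 1 (k / 2) := by
    intro k
    apply max_le_max le_rfl
    have := hspec (n k)
    have h2 := hmono.le_iff_le.mp this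
    omega
  have hf : Corset f := by
    refine ⟨fun a b hab => max_le_max le_rfl (hFmono hab), fun m => Nat.lt_of_lt_of_le Nat.one_pos (le_max_left 1 (F m)), ?_⟩
    rw [Filter.tendsto_atTop]
    intro b
    rw [Filter.eventually_atTop]
    refine ⟨n (2*b), fun m hm => ?_⟩
    have hb : b ≤ F m := by
      simp only [hF]
      exact Nat.le_findGreatest (P := fun k => n (2*k) ≤ m)
        (le_trans (le_trans (by omega) (hmono.le_apply)) hm) hm
    exact le_trans hb (le_max_right _ _)
  -- get the trees
  obtain ⟨S, hS, hXsub⟩ := h f hf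
  -- key nowhere-density
  have key : ∀ j m', CylNwd (LimT (S m') + M j) := by
    intro j m' ρ₀
    obtain ⟨m0, hm0⟩ := Filter.eventually_atTop.mp (hS m').2
    set k0 : ℕ := j + ρ₀.length + m0 + 1 with hk0
    set T : ℕ := k0 + 2 with hT
    have hwidth : {σ | σ ∈ S m' ∧ σ.length = n (k0+T)}.ncard < T := by
      have h1 : {τ | τ ∈ S m' ∧ τ.length = n (k0+T)}.ncard ≤ f (n (k0+T)) :=
        hm0 _ (le_trans (show m0 ≤ k0+T by omega) hmono.le_apply)
      have h2 := hfkey (k0+T)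
      have h3 : (k0+T)/2 = k0 + 1 := by omega
      rw [h3] at h2
      have h4 : max 1 (k0+1) = k0+1 := by omega
      rw [h4] at h2
      omega
    have hρ₀len : (ρ₀ ++ List.replicate (n k0 - ρ₀.length) 0).length = n k0 := by
      have : ρ₀.length ≤ n k0 := le_trans (show ρ₀.length ≤ k0 by omega) hmono.le_apply
      simp; omega
    obtain ⟨ρ, hρpre, hρlen, hρdead⟩ := killAll (hS m').1 n hmono k0 T
      (fun k hk => hE j k (by omega)) hwidth _ hρ₀len
    refine ⟨ρ, (List.prefix_append _ _).trans hρpre, ?_⟩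
    apply cyl_disjoint_sum
    intro σ hσS hσlen
    exact hρdead σ hσS (by rw [hσlen, hρlen])
  -- enumerate the finite-support translations
  obtain ⟨e, he⟩ := finSupp_countable.exists_eq_range finSupp_nonempty
  -- assemble
  have hmeag : IsMeagre (⋃ j, ⋃ m', ⋃ i, ({e i} + (LimT (S m') + M j))) :=
    isMeagre_iUnion fun j => isMeagre_iUnion fun m' => isMeagre_iUnion fun i =>
      (CylNwd.vadd (key j m') (e i)).isMeagre
  apply hmeag.mono
  rintro z hz
  rw [Set.mem_add] at hz
  obtain ⟨x, hx, a, ha, rfl⟩ := hz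
  obtain ⟨j, hj⟩ := Set.mem_iUnion.mp (hAcover ha)
  obtain ⟨m', hm'⟩ := Set.mem_iUnion.mp (hXsub hx)
  have := finEq_subset_union hm'
  rw [Set.mem_iUnion₂] at this
  obtain ⟨t, htF, hxt⟩ := this
  rw [Set.mem_add] at hxt
  obtain ⟨t₀, ht₀, z₀, hz₀, hxeq⟩ := hxt
  rw [Set.mem_singleton_iff] at ht₀
  subst ht₀
  obtain ⟨i, rfl⟩ : ∃ i, e i = t₀ := by
    have : t₀ ∈ Set.range e := he ▸ htF
    exact this
  refine Set.mem_iUnion.mpr ⟨j, Set.mem_iUnion.mpr ⟨m', Set.mem_iUnion.mpr ⟨i, ?_⟩⟩⟩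
  rw [Set.mem_add]
  refine ⟨e i, rfl, z₀ + a, ?_, ?_⟩
  · rw [Set.mem_add]; exact ⟨z₀, hz₀, a, hj, rfl⟩
  · rw [← add_assoc, hxeq]
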